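/- arXiv:2002.06593 — 11 statements merged into one kernel-verified Lean document; each statement's English description precedes it below -/
import Mathlib

section
/- For parameters a = b = 1, the set of stationary points of the CDK polynomial vector field, i.e. the zero set { (x,y) ∈ ℝ² : f_{1,1}(x,y) = (0,0) }, is exactly the circle { (x,y) : x² + (y − 1/2)² = 1/4 }. -/
/-- The CDK polynomial vector field. -/
def cdk (a b : ℝ) : ℝ × ℝ → ℝ × ℝ := fun p =>
  (p.1 * p.2 - a * (p.1 ^ 3 + p.1 * p.2 ^ 2),
   p.2 ^ 2 - (b * p.2 - b + 1) * (p.1 ^ 2 + p.2 ^ 2))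

/-- for `a = b = 1` the stationary points of the CDK polynomial
vector field are exactly the points of the circle `x² + (y − 1/2)² = 1/4`. -/
theorem cdk_stationary_points_a_eq_one_b_eq_one :
    {p : ℝ × ℝ | cdk 1 1 p = (0, 0)}
      = {p : ℝ × ℝ | p.1 ^ 2 + (p.2 - 1 / 2) ^ 2 = 1 / 4} := by
  ext ⟨x, y⟩
  simp only [Set.mem_setOf_eq, cdk, Prod.mk.injEq]
  constructor
  · rintro ⟨h1, h2⟩
    have hc : x ^ 2 + y ^ 2 = y := by
      have hx : x * (y - x ^ 2 - y ^ 2) = 0 := by ring_nf; ring_nf at h1; linarith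
      have hy : y * (y - x ^ 2 - y ^ 2) = 0 := by ring_nf; ring_nf at h2; linarith
      rcases mul_eq_zero.1 hx with hx0 | h
      · rcases mul_eq_zero.1 hy with hy0 | h
        · simp [hx0, hy0]
        · linarith
      · linarith
    nlinarith [hc]
  · intro h
    have hc : x ^ 2 + y ^ 2 = y := by nlinarith
    exact ⟨by linear_combination -x * hc, by linear_combination -y * hc⟩
end

section
/- Let a, b > 0 satisfy either (b > 1 and a < 1) or (b < 1 and a > 1), and set y₂ = −(b − 1)/(a − b). Then y₂/a − y₂² > 0, and the zero set of the CDK polynomial vector field f_{a,b} consists of exactly the four points s₁ = (0,0), s₂ = (0,1), s₃ = (√(y₂/a − y₂²), y₂) and s₄ = (−√(y₂/a − y₂²), y₂). -/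
/-- for `b > 1 > a` or `b < 1 < a` the CDK polynomial vector field
has exactly four stationary points `s₁, s₂, s₃, s₄`. -/
theorem cdk_stationary_points_four (a b : ℝ) (ha : 0 < a) (hb : 0 < b)
    (hab : (1 < b ∧ a < 1) ∨ (b < 1 ∧ 1 < a)) :
    let y₂ : ℝ := -(b - 1) / (a - b)
    y₂ / a - y₂ ^ 2 > 0 ∧
      {p : ℝ × ℝ | cdk a b p = (0, 0)}
        = {((0 : ℝ), (0 : ℝ)), ((0 : ℝ), (1 : ℝ)),
           (Real.sqrt (y₂ / a - y₂ ^ 2), y₂), (-Real.sqrt (y₂ / a - y₂ ^ 2), y₂)} := by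
  intro y₂
  have hane : a ≠ 0 := ha.ne'
  have hy₂def : y₂ = -(b - 1) / (a - b) := rfl
  clear_value y₂
  have hab0 : a - b ≠ 0 := by
    rcases hab with ⟨h1, h2⟩ | ⟨h1, h2⟩
    · exact ne_of_lt (by linarith)
    · exact ne_of_gt (by linarith)
  have hkey : y₂ * (a - b) = 1 - b := by
    rw [hy₂def]; field_simp; ring
  have hy₂pos : 0 < y₂ := by
    rw [hy₂def]
    rcases hab with ⟨h1, h2⟩ | ⟨h1, h2⟩
    · exact div_pos_iff.mpr (Or.inr ⟨by linarith, by linarith⟩)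
    · exact div_pos_iff.mpr (Or.inl ⟨by linarith, by linarith⟩)
  have hkey2 : (1 - a * y₂) * (a - b) = b * (a - 1) := by
    linear_combination (-a) * hkey
  have h1a : a * y₂ < 1 := by
    rcases hab with ⟨h1, h2⟩ | ⟨h1, h2⟩ <;> nlinarith [hkey2]
  have hpos : y₂ / a - y₂ ^ 2 > 0 := by
    rw [gt_iff_lt, sub_pos, lt_div_iff₀ ha]
    nlinarith [hy₂pos, h1a]
  set r := Real.sqrt (y₂ / a - y₂ ^ 2) with hrdef
  have hr2 : r ^ 2 = y₂ / a - y₂ ^ 2 := Real.sq_sqrt hpos.le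
  refine ⟨hpos, ?_⟩
  ext ⟨x, y⟩
  simp only [cdk, Set.mem_setOf_eq, Set.mem_insert_iff, Set.mem_singleton_iff, Prod.mk.injEq]
  constructor
  · rintro ⟨h1, h2⟩
    by_cases hx : x = 0
    · subst hx
      have hy : b * (y ^ 2 * (1 - y)) = 0 := by linear_combination h2
      rcases mul_eq_zero.mp hy with h | h
      · exact absurd h hb.ne'
      · rcases mul_eq_zero.mp h with h | h
        · exact Or.inl ⟨rfl, pow_eq_zero_iff two_ne_zero |>.mp h⟩
        · exact Or.inr (Or.inl ⟨rfl, by linarith⟩)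
    · have h1' : y - a * (x ^ 2 + y ^ 2) = 0 := by
        have hmul : x * (y - a * (x ^ 2 + y ^ 2)) = 0 := by linear_combination h1
        exact (mul_eq_zero.mp hmul).resolve_left hx
      have hx2pos : 0 < x ^ 2 := by positivity
      have hxy : 0 < x ^ 2 + y ^ 2 := by nlinarith [sq_nonneg y]
      have hypos : 0 < y := by nlinarith [h1']
      have h3 : y * ((a - b) * y - (1 - b)) = 0 := by
        linear_combination a * h2 - (b * y - b + 1) * h1'
      have h4 : (a - b) * y - (1 - b) = 0 :=
        (mul_eq_zero.mp h3).resolve_left hypos.ne'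
      have hy2 : y = y₂ := by
        rw [hy₂def, eq_div_iff hab0]; linear_combination h4
      rw [hy2] at h1'
      have hx2 : x ^ 2 = r ^ 2 := by
        rw [hr2, eq_sub_iff_add_eq, eq_div_iff hane]
        linear_combination -h1'
      have hfac : (x - r) * (x + r) = 0 := by linear_combination hx2
      rcases mul_eq_zero.mp hfac with h | h
      · exact Or.inr (Or.inr (Or.inl ⟨by linarith, hy2⟩))
      · exact Or.inr (Or.inr (Or.inr ⟨by linarith, hy2⟩))
  · have haux : a * (r ^ 2 + y₂ ^ 2) = y₂ := by
      rw [hr2]; field_simp; ring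
    have h6 : a * y₂ ^ 2 = (b * y₂ - b + 1) * y₂ := by linear_combination y₂ * hkey
    have hsecond : y₂ ^ 2 - (b * y₂ - b + 1) * (r ^ 2 + y₂ ^ 2) = 0 := by
      have hmul : a * (y₂ ^ 2 - (b * y₂ - b + 1) * (r ^ 2 + y₂ ^ 2)) = 0 := by
        linear_combination h6 - (b * y₂ - b + 1) * haux
      exact (mul_eq_zero.mp hmul).resolve_left hane
    rintro (⟨hx, hy⟩ | ⟨hx, hy⟩ | ⟨hx, hy⟩ | ⟨hx, hy⟩) <;> subst hx <;> subst hy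
    · norm_num
    · norm_num
    · exact ⟨by linear_combination (-r) * haux, by linear_combination hsecond⟩
    · exact ⟨by linear_combination r * haux, by linear_combination hsecond⟩
end

section
/- Let a, b > 0 be such that it is not the case that a = 1 and b = 1, and such that neither (b > 1 and a < 1) nor (b < 1 and a > 1) holds. Then the zero set of the CDK polynomial vector field f_{a,b} consists of exactly the two points s₁ = (0,0) and s₂ = (0,1). -/
/-- in all remaining cases of positive parameters
(neither `a = b = 1`, nor `b > 1 > a`, nor `b < 1 < a`) the CDK polynomial
vector field has exactly the two stationary points `(0,0)` and `(0,1)`. -/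
theorem cdk_stationary_points_two (a b : ℝ) (ha : 0 < a) (hb : 0 < b)
    (hone : ¬ (a = 1 ∧ b = 1))
    (hcase : ¬ ((1 < b ∧ a < 1) ∨ (b < 1 ∧ 1 < a))) :
    {p : ℝ × ℝ | cdk a b p = (0, 0)} = {((0 : ℝ), (0 : ℝ)), ((0 : ℝ), (1 : ℝ))} := by
  push_neg at hcase
  obtain ⟨hc1, hc2⟩ := hcase
  ext ⟨x, y⟩
  simp only [cdk, Set.mem_setOf_eq, Set.mem_insert_iff, Set.mem_singleton_iff,
    Prod.mk.injEq]
  constructor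
  · rintro ⟨h1, h2⟩
    by_cases hx : x = 0
    · subst hx
      have hfac : b * (y ^ 2 * (y - 1)) = 0 := by linear_combination -h2
      have := mul_eq_zero.mp hfac
      rcases this with h | h
      · exact absurd h (ne_of_gt hb)
      · rcases mul_eq_zero.mp h with h' | h'
        · left; exact ⟨rfl, by nlinarith [sq_nonneg y]⟩
        · right; exact ⟨rfl, by linarith⟩
    · exfalso
      have hx2 : 0 < x ^ 2 := by positivity
      have h1' : x * (y - a * (x ^ 2 + y ^ 2)) = 0 := by linear_combination h1
      have hyeq : y - a * (x ^ 2 + y ^ 2) = 0 := by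
        rcases mul_eq_zero.mp h1' with h | h
        · exact absurd h hx
        · exact h
      have hs : 0 < x ^ 2 + y ^ 2 := by positivity
      have hypos : 0 < y := by nlinarith
      have h3 : y * (a * y - (b * y - b + 1)) = 0 := by
        linear_combination a * h2 - (b * y - b + 1) * hyeq
      have key : a * y = b * y - b + 1 := by
        rcases mul_eq_zero.mp h3 with h | h
        · exact absurd h (ne_of_gt hypos)
        · linarith
      have h4 : y * (1 - a * y) = a * x ^ 2 := by linear_combination hyeq
      have hay : a * y < 1 := by nlinarith [mul_pos ha hx2]
      have hy1 : y < 1 := by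
        have h5 : b * y < b * 1 := by linarith
        exact lt_of_mul_lt_mul_left h5 hb.le
      rcases lt_trichotomy b 1 with hb1 | hb1 | hb1
      · have ha1 : a ≤ 1 := hc2 hb1
        nlinarith [mul_nonneg (sub_nonneg.mpr ha1) hypos.le,
          mul_pos (sub_pos.mpr hb1) (sub_pos.mpr hy1)]
      · subst hb1
        have hya : (a - 1) * y = 0 := by linarith
        rcases mul_eq_zero.mp hya with h | h
        · exact hone ⟨by linarith, rfl⟩
        · exact absurd h (ne_of_gt hypos)
      · have ha1 : 1 ≤ a := hc1 hb1
        nlinarith [mul_nonneg (sub_nonneg.mpr ha1) hypos.le,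
          mul_pos (sub_pos.mpr hb1) (sub_pos.mpr hy1)]
  · rintro (⟨hx, hy⟩ | ⟨hx, hy⟩) <;> subst hx <;> subst hy <;> norm_num
end

section
/- Let a, b > 0 with b ≠ 1 and a ≠ b. Then the real number −(b − 1)²/(a − b)² − (b − 1)/(a(a − b)) is strictly positive if and only if either (b > 1 and a < 1) or (b < 1 and a > 1). (This expression is the value of x² at any stationary point of the CDK system with x ≠ 0.) -/
/-- for positive parameters with `b ≠ 1` and `a ≠ b`, the value of
`x²` at a stationary point with `x ≠ 0` is strictly positive if and only if
`b > 1 > a` or `b < 1 < a`. -/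
theorem cdk_xsquare_positive_iff (a b : ℝ) (ha : 0 < a) (hb : 0 < b)
    (hb1 : b ≠ 1) (hab : a ≠ b) :
    0 < -(b - 1) ^ 2 / (a - b) ^ 2 - (b - 1) / (a * (a - b)) ↔
      (1 < b ∧ a < 1) ∨ (b < 1 ∧ 1 < a) := by
  have hab' : a - b ≠ 0 := sub_ne_zero.mpr hab
  have hD : 0 < a * (a - b) ^ 2 := by positivity
  have key : -(b - 1) ^ 2 / (a - b) ^ 2 - (b - 1) / (a * (a - b))
      = (b * (b - 1) * (1 - a)) / (a * (a - b) ^ 2) := by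
    field_simp
    ring
  rw [key, div_pos_iff]
  constructor
  · rintro (⟨hN, -⟩ | ⟨-, hD'⟩)
    · rcases lt_or_gt_of_ne hb1 with h | h
      · right
        refine ⟨h, by nlinarith [mul_pos hb (show (0:ℝ) < 1 - b by linarith)]⟩
      · left
        refine ⟨h, by nlinarith⟩
    · linarith
  · rintro (⟨h1, h2⟩ | ⟨h1, h2⟩)
    · exact Or.inl ⟨by nlinarith [mul_pos (mul_pos hb (show (0:ℝ) < b - 1 by linarith)) (show (0:ℝ) < 1 - a by linarith)], hD⟩
    · exact Or.inl ⟨by nlinarith [mul_pos (mul_pos hb (show (0:ℝ) < 1 - b by linarith)) (show (0:ℝ) < a - 1 by linarith)], hD⟩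
end

section
/- Let a, b > 0 satisfy either (b > 1 and a < 1) or (a > 1 and b < 1), set y₂ = −(b − 1)/(a − b) and let x_k be either of the two values ±√(y₂/a − y₂²). Then the Jacobian matrix J of the CDK polynomial vector field f_{a,b} at the stationary point (x_k, y₂) has trace tr J = b(1 − b)/(a(b − a)) and determinant det J = 2b(b − 1)²(1 − a)/(a(b − a)²), independently of the choice of sign of x_k; in particular the Jacobian matrices at s₃ and s₄ have the same characteristic polynomial. -/
/-- The Jacobian matrix of a planar vector field at a point, expressed via the
total (Fréchet) derivative applied to the standard basis vectors. -/
noncomputable def jacobianAt (f : ℝ × ℝ → ℝ × ℝ) (p : ℝ × ℝ) : Matrix (Fin 2) (Fin 2) ℝ :=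
  !![(fderiv ℝ f p (1, 0)).1, (fderiv ℝ f p (0, 1)).1;
     (fderiv ℝ f p (1, 0)).2, (fderiv ℝ f p (0, 1)).2]

noncomputable def cdkDeriv (a b : ℝ) (p : ℝ × ℝ) : ℝ × ℝ →L[ℝ] ℝ × ℝ :=
  ContinuousLinearMap.prod
    ((p.2 - a * (3 * p.1 ^ 2 + p.2 ^ 2)) • ContinuousLinearMap.fst ℝ ℝ ℝ
      + (p.1 - 2 * a * p.1 * p.2) • ContinuousLinearMap.snd ℝ ℝ ℝ)
    ((-2 * p.1 * (b * p.2 - b + 1)) • ContinuousLinearMap.fst ℝ ℝ ℝ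
      + (2 * p.2 - b * (p.1 ^ 2 + p.2 ^ 2) - 2 * p.2 * (b * p.2 - b + 1)) • ContinuousLinearMap.snd ℝ ℝ ℝ)

lemma cdk_hasFDerivAt (a b : ℝ) (p : ℝ × ℝ) :
    HasFDerivAt (cdk a b) (cdkDeriv a b p) p := by
  have hfun : cdk a b = (fun q : ℝ × ℝ =>
      (q.1 * q.2 - a * (q.1 * q.1 * q.1 + q.1 * (q.2 * q.2)),
       q.2 * q.2 - (b * q.2 - b + 1) * (q.1 * q.1 + q.2 * q.2))) := by
    funext q; simp only [cdk, Prod.mk.injEq]; constructor <;> ring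
  rw [hfun]
  have FX : HasFDerivAt (Prod.fst : ℝ × ℝ → ℝ) (ContinuousLinearMap.fst ℝ ℝ ℝ) p := hasFDerivAt_fst
  have SX : HasFDerivAt (Prod.snd : ℝ × ℝ → ℝ) (ContinuousLinearMap.snd ℝ ℝ ℝ) p := hasFDerivAt_snd
  have h1 : HasFDerivAt (fun q : ℝ × ℝ => q.1 * q.2 - a * (q.1 * q.1 * q.1 + q.1 * (q.2 * q.2))) _ p :=
    ((FX.mul SX).sub
      ((((FX.mul FX).mul FX).add
        (FX.mul (SX.mul SX))).const_mul a))
  have h2 : HasFDerivAt (fun q : ℝ × ℝ => q.2 * q.2 - (b * q.2 - b + 1) * (q.1 * q.1 + q.2 * q.2)) _ p :=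
    ((SX.mul SX).sub
      ((((SX.const_mul b).sub_const b).add_const 1).mul
        ((FX.mul FX).add (SX.mul SX))))
  have h := HasFDerivAt.prodMk h1 h2
  refine HasFDerivAt.congr_fderiv h ?_
  ext <;> simp [cdkDeriv] <;> ring

/-- for `b > 1 > a` or `a > 1 > b`, the Jacobian of the CDK
polynomial vector field at `s₃` and `s₄` has trace `b(1-b)/(a(b-a))` and
determinant `2b(b-1)²(1-a)/(a(b-a)²)`, independently of the sign of `x_k`. -/
theorem cdk_jacobian_s34_trace_det (a b : ℝ) (ha : 0 < a) (hb : 0 < b)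
    (hab : (1 < b ∧ a < 1) ∨ (1 < a ∧ b < 1))
    (y₂ : ℝ) (hy₂ : y₂ = -(b - 1) / (a - b)) (xk : ℝ)
    (hxk : xk = Real.sqrt (y₂ / a - y₂ ^ 2) ∨ xk = -Real.sqrt (y₂ / a - y₂ ^ 2)) :
    (jacobianAt (cdk a b) (xk, y₂)).trace = b * (1 - b) / (a * (b - a)) ∧
    (jacobianAt (cdk a b) (xk, y₂)).det = 2 * b * (b - 1) ^ 2 * (1 - a) / (a * (b - a) ^ 2) := by
  have ha0 : a ≠ 0 := ne_of_gt ha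
  have hab0 : a - b ≠ 0 := by rcases hab with ⟨h1, h2⟩ | ⟨h1, h2⟩ <;> nlinarith
  have hba0 : b - a ≠ 0 := by intro h; apply hab0; linarith
  have hkey : y₂ / a - y₂ ^ 2 = b * (1 - b) * (a - 1) / (a * (a - b) ^ 2) := by
    subst hy₂; field_simp; ring
  have hpos : 0 ≤ y₂ / a - y₂ ^ 2 := by
    rw [hkey]
    rcases hab with ⟨h1, h2⟩ | ⟨h1, h2⟩
    · apply div_nonneg
      · nlinarith [mul_nonneg (by linarith : (0:ℝ) ≤ b - 1) (by linarith : (0:ℝ) ≤ 1 - a)]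
      · positivity
    · apply div_nonneg
      · nlinarith [mul_nonneg (by linarith : (0:ℝ) ≤ 1 - b) (by linarith : (0:ℝ) ≤ a - 1)]
      · positivity
  have hx2 : xk ^ 2 = y₂ / a - y₂ ^ 2 := by
    rcases hxk with h | h <;> rw [h]
    · exact Real.sq_sqrt hpos
    · rw [neg_pow]; simp [Real.sq_sqrt hpos]
  have hfd := (cdk_hasFDerivAt a b (xk, y₂)).fderiv
  have hJ : jacobianAt (cdk a b) (xk, y₂) =
      !![y₂ - a * (3 * xk ^ 2 + y₂ ^ 2), xk - 2 * a * xk * y₂;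
         -2 * xk * (b * y₂ - b + 1), 2 * y₂ - b * (xk ^ 2 + y₂ ^ 2) - 2 * y₂ * (b * y₂ - b + 1)] := by
    rw [jacobianAt, hfd]
    simp [cdkDeriv]
  rw [hJ]
  constructor
  · rw [Matrix.trace_fin_two_of, hx2]
    subst hy₂; field_simp; ring
  · rw [Matrix.det_fin_two_of]
    have step : (y₂ - a * (3 * xk ^ 2 + y₂ ^ 2)) *
          (2 * y₂ - b * (xk ^ 2 + y₂ ^ 2) - 2 * y₂ * (b * y₂ - b + 1)) -
        (xk - 2 * a * xk * y₂) * (-2 * xk * (b * y₂ - b + 1)) =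
        (y₂ - a * (3 * (y₂ / a - y₂ ^ 2) + y₂ ^ 2)) *
          (2 * y₂ - b * ((y₂ / a - y₂ ^ 2) + y₂ ^ 2) - 2 * y₂ * (b * y₂ - b + 1)) +
        2 * (y₂ / a - y₂ ^ 2) * (1 - 2 * a * y₂) * (b * y₂ - b + 1) := by
      rw [← hx2]; ring
    rw [step]
    subst hy₂
    field_simp
    ring
end

section
/- Let a, b > 0 with a > 1 > b, set y₂ = −(b − 1)/(a − b) and let x_k be either of ±√(y₂/a − y₂²). Then the determinant of the Jacobian matrix of the CDK polynomial vector field f_{a,b} at (x_k, y₂) is strictly negative; hence the Jacobian has one strictly positive and one strictly negative real eigenvalue, so s₃ and s₄ are saddle points. -/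
lemma cdk_jac (a b x y : ℝ) : jacobianAt (cdk a b) (x, y) =
    !![y - a * (3 * x ^ 2 + y ^ 2), x - 2 * a * x * y;
       -2 * x * (b * y - b + 1), 2 * y - b * (x ^ 2 + y ^ 2) - 2 * y * (b * y - b + 1)] := by
  have hfun : cdk a b = (fun p : ℝ × ℝ =>
      (p.1 * p.2 - a * (p.1 * (p.1 * p.1) + p.1 * (p.2 * p.2)),
       p.2 * p.2 - (b * p.2 - b + 1) * (p.1 * p.1 + p.2 * p.2))) := by
    funext p; exact Prod.ext (by simp only [cdk]; ring) (by simp only [cdk]; ring)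
  have hX : HasFDerivAt (fun p : ℝ × ℝ => p.1) (ContinuousLinearMap.fst ℝ ℝ ℝ) (x, y) :=
    hasFDerivAt_fst
  have hY : HasFDerivAt (fun p : ℝ × ℝ => p.2) (ContinuousLinearMap.snd ℝ ℝ ℝ) (x, y) :=
    hasFDerivAt_snd
  have H : HasFDerivAt (fun p : ℝ × ℝ =>
      (p.1 * p.2 - a * (p.1 * (p.1 * p.1) + p.1 * (p.2 * p.2)),
       p.2 * p.2 - (b * p.2 - b + 1) * (p.1 * p.1 + p.2 * p.2))) _ (x, y) := ((hX.mul hY).sub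
      (((hX.mul (hX.mul hX)).add
        (hX.mul (hY.mul hY))).const_mul a)).prodMk
      ((hY.mul hY).sub
        ((((hY.const_mul b).sub_const b).add_const 1).mul
          ((hX.mul hX).add (hY.mul hY))))
  rw [← hfun] at H
  rw [jacobianAt, H.fderiv]
  ext i j
  fin_cases i <;> fin_cases j <;> simp <;> ring

lemma saddle_aux (t d : ℝ) (hd : d < 0) :
    ∃ l1 l2 : ℝ, 0 < l1 ∧ l2 < 0 ∧ l1 + l2 = t ∧ l1 * l2 = d := by
  have hnn : (0:ℝ) ≤ t ^ 2 - 4 * d := by nlinarith [sq_nonneg t]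
  set s := Real.sqrt (t ^ 2 - 4 * d) with hs
  have hs2 : s ^ 2 = t ^ 2 - 4 * d := Real.sq_sqrt hnn
  have hs0 : 0 ≤ s := Real.sqrt_nonneg _
  refine ⟨(t + s) / 2, (t - s) / 2, ?_, ?_, by ring, by nlinarith⟩
  · nlinarith [sq_nonneg (s + t), sq_nonneg (s - t)]
  · nlinarith [sq_nonneg (s + t), sq_nonneg (s - t)]

/-- for `a > 1 > b`, the Jacobian at `s₃` and `s₄` has negative
determinant, hence one strictly positive and one strictly negative real
eigenvalue: `s₃` and `s₄` are saddle points. -/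
theorem cdk_s34_saddle (a b : ℝ) (ha : 0 < a) (hb : 0 < b)
    (hab : b < 1 ∧ 1 < a)
    (y₂ : ℝ) (hy₂ : y₂ = -(b - 1) / (a - b)) (xk : ℝ)
    (hxk : xk = Real.sqrt (y₂ / a - y₂ ^ 2) ∨ xk = -Real.sqrt (y₂ / a - y₂ ^ 2)) :
    (jacobianAt (cdk a b) (xk, y₂)).det < 0 ∧
      ∃ lam₁ lam₂ : ℝ, 0 < lam₁ ∧ lam₂ < 0 ∧
        lam₁ + lam₂ = (jacobianAt (cdk a b) (xk, y₂)).trace ∧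
        lam₁ * lam₂ = (jacobianAt (cdk a b) (xk, y₂)).det := by
  obtain ⟨hb1, ha1⟩ := hab
  have hba : (0:ℝ) < a - b := by linarith
  have hy2pos : 0 < y₂ := by
    rw [hy₂]; apply div_pos <;> linarith
  have hc : b * y₂ - b + 1 = a * y₂ := by
    rw [hy₂]; field_simp; ring
  have h1 : 0 < 1 - a * y₂ := by
    have e : 1 - a * y₂ = b * (a - 1) / (a - b) := by
      rw [hy₂]; field_simp; ring
    rw [e]; apply div_pos (by nlinarith) hba
  have hnn : 0 ≤ y₂ / a - y₂ ^ 2 := by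
    have e : y₂ / a - y₂ ^ 2 = y₂ * (1 - a * y₂) / a := by
      field_simp
    rw [e]; positivity
  have hx2 : xk ^ 2 = y₂ / a - y₂ ^ 2 := by
    rcases hxk with h | h <;> rw [h]
    · exact Real.sq_sqrt hnn
    · rw [neg_pow]; simp [Real.sq_sqrt hnn]
  rw [cdk_jac]
  rw [Matrix.det_fin_two_of, Matrix.trace_fin_two_of]
  have hdet : (y₂ - a * (3 * xk ^ 2 + y₂ ^ 2)) *
        (2 * y₂ - b * (xk ^ 2 + y₂ ^ 2) - 2 * y₂ * (b * y₂ - b + 1)) -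
        (xk - 2 * a * xk * y₂) * (-2 * xk * (b * y₂ - b + 1)) =
      2 * y₂ ^ 2 * (1 - a * y₂) * (b - a) / a := by
    have hx4 : xk ^ 4 = (y₂ / a - y₂ ^ 2) ^ 2 := by rw [← hx2]; ring
    rw [hc]
    ring_nf
    rw [hx2, hx4]
    field_simp
    ring
  have hdneg : 2 * y₂ ^ 2 * (1 - a * y₂) * (b - a) / a < 0 := by
    apply div_neg_of_neg_of_pos _ ha
    have : (0:ℝ) < 2 * y₂ ^ 2 * (1 - a * y₂) := by positivity
    nlinarith
  rw [hdet]
  exact ⟨hdneg, saddle_aux _ _ hdneg⟩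
end

section
/- Let a, b > 0 with b > 1 > a, set y₂ = −(b − 1)/(a − b) and let x_k be either of ±√(y₂/a − y₂²). Then the Jacobian matrix of the CDK polynomial vector field f_{a,b} at (x_k, y₂) has strictly negative trace and strictly positive determinant; hence both its eigenvalues (real or complex) have strictly negative real part, so s₃ and s₄ are attracting stationary points. -/
lemma cdk_jacobian (a b : ℝ) (p : ℝ × ℝ) :
    jacobianAt (cdk a b) p =
      !![p.2 - a * (3 * p.1 ^ 2 + p.2 ^ 2), p.1 - 2 * a * p.1 * p.2;
         -(2 * p.1 * (b * p.2 - b + 1)),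
         2 * p.2 - b * (p.1 ^ 2 + p.2 ^ 2) - 2 * p.2 * (b * p.2 - b + 1)] := by
  have hx : HasFDerivAt (fun q : ℝ × ℝ => q.1) (ContinuousLinearMap.fst ℝ ℝ ℝ) p := hasFDerivAt_fst
  have hy : HasFDerivAt (fun q : ℝ × ℝ => q.2) (ContinuousLinearMap.snd ℝ ℝ ℝ) p := hasFDerivAt_snd
  have h1' : HasFDerivAt (fun q : ℝ × ℝ => q.1 * q.2 - a * (q.1 * (q.1 * q.1) + q.1 * (q.2 * q.2))) _ p :=
    ((hx.mul hy).sub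
      (((hx.mul (hx.mul hx)).add (hx.mul (hy.mul hy))).const_mul a))
  have h1 : HasFDerivAt (fun q : ℝ × ℝ => q.1 * q.2 - a * (q.1 ^ 3 + q.1 * q.2 ^ 2)) _ p :=
    h1'.congr_of_eventuallyEq (by filter_upwards with q; ring)
  have h2' : HasFDerivAt (fun q : ℝ × ℝ => q.2 * q.2 - (b * q.2 - b + 1) * (q.1 * q.1 + q.2 * q.2)) _ p :=
    ((hy.mul hy).sub
      ((((hy.const_mul b).sub_const b).add_const 1).mul
        ((hx.mul hx).add (hy.mul hy))))
  have h2 : HasFDerivAt (fun q : ℝ × ℝ => q.2 ^ 2 - (b * q.2 - b + 1) * (q.1 ^ 2 + q.2 ^ 2)) _ p :=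
    h2'.congr_of_eventuallyEq (by filter_upwards with q; ring)
  have h : HasFDerivAt (cdk a b) _ p := h1.prodMk h2
  have hf := h.fderiv
  unfold jacobianAt
  rw [hf]
  congr 1 <;> simp <;> refine ⟨⟨?_, ?_⟩, ?_, ?_⟩ <;> ring

lemma root_re_neg (T D : ℝ) (hT : T < 0) (hD : 0 < D) (z : ℂ)
    (hz : z ^ 2 - (T : ℂ) * z + (D : ℂ) = 0) : z.re < 0 := by
  have h1 : z.re * z.re - z.im * z.im - T * z.re + D = 0 := by
    have := congrArg Complex.re hz
    simpa [pow_two, Complex.mul_re] using this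
  have h2 : z.im * (z.re + z.re - T) = 0 := by
    have := congrArg Complex.im hz
    simp [pow_two, Complex.mul_im] at this
    nlinarith [this]
  rcases mul_eq_zero.mp h2 with h0 | h0
  · nlinarith [sq_nonneg z.re, mul_self_nonneg z.re]
  · linarith

/-- for `b > 1 > a`, the Jacobian at `s₃` and `s₄` has negative
trace and positive determinant; hence every (real or complex) eigenvalue, i.e.
every complex root of the characteristic polynomial `z² − (tr J)z + det J`,
has strictly negative real part, so `s₃` and `s₄` are attracting. -/
theorem cdk_s34_attracting (a b : ℝ) (ha : 0 < a) (hb : 0 < b)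
    (hab : 1 < b ∧ a < 1)
    (y₂ : ℝ) (hy₂ : y₂ = -(b - 1) / (a - b)) (xk : ℝ)
    (hxk : xk = Real.sqrt (y₂ / a - y₂ ^ 2) ∨ xk = -Real.sqrt (y₂ / a - y₂ ^ 2)) :
    (jacobianAt (cdk a b) (xk, y₂)).trace < 0 ∧
    0 < (jacobianAt (cdk a b) (xk, y₂)).det ∧
      ∀ z : ℂ, z ^ 2 - ((jacobianAt (cdk a b) (xk, y₂)).trace : ℂ) * z
          + ((jacobianAt (cdk a b) (xk, y₂)).det : ℂ) = 0 → z.re < 0 := by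
  obtain ⟨hb1, ha1⟩ := hab
  have hba : (0:ℝ) < b - a := by linarith
  have hy₂' : y₂ = (b - 1) / (b - a) := by
    rw [hy₂, div_eq_div_iff (by linarith) (by linarith)]; ring
  have hypos : 0 < y₂ := by rw [hy₂']; exact div_pos (by linarith) hba
  have hquad : y₂ / a - y₂ ^ 2 = (b - 1) * b * (1 - a) / (a * (b - a) ^ 2) := by
    rw [hy₂']; field_simp; ring
  have hqpos : 0 < y₂ / a - y₂ ^ 2 := by
    rw [hquad]
    exact div_pos (mul_pos (mul_pos (by linarith) hb) (by linarith)) (by positivity)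
  have hx2 : xk ^ 2 = y₂ / a - y₂ ^ 2 := by
    rcases hxk with h | h <;> rw [h] <;>
      simp [Real.sq_sqrt hqpos.le, neg_pow]
  have hx2pos : 0 < xk ^ 2 := hx2 ▸ hqpos
  have hbr : b * y₂ - b + 1 = a * y₂ := by
    rw [hy₂']; field_simp; ring
  have hax2 : a * xk ^ 2 = y₂ - a * y₂ ^ 2 := by
    rw [hx2]; field_simp
  have hJ : jacobianAt (cdk a b) (xk, y₂) =
      !![-2 * y₂ + 2 * a * y₂ ^ 2, xk - 2 * a * xk * y₂;
         -2 * a * xk * y₂, 2 * y₂ - b / a * y₂ - 2 * a * y₂ ^ 2] := by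
    rw [cdk_jacobian]
    ext i j
    fin_cases i <;> fin_cases j <;> simp
    · linear_combination (-3 : ℝ) * hax2
    · linear_combination (2 * xk) * hbr
    · linear_combination (-b) * hx2 + (-2 * y₂) * hbr
  have htr : (jacobianAt (cdk a b) (xk, y₂)).trace = -(b / a) * y₂ := by
    rw [hJ, Matrix.trace_fin_two_of]; ring
  have hdet : (jacobianAt (cdk a b) (xk, y₂)).det = 2 * xk ^ 2 * y₂ * (b - a) := by
    rw [hJ, Matrix.det_fin_two_of]
    have hB : b / a * a = b := div_mul_cancel₀ b ha.ne'
    linear_combination (2 * y₂ * (2 - 2 * a * y₂ - b / a)) * hax2 + (2 * xk ^ 2 * y₂) * hB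
  have htrneg : (jacobianAt (cdk a b) (xk, y₂)).trace < 0 := by
    rw [htr]
    have hba' : 0 < b / a := div_pos hb ha
    nlinarith
  have hdetpos : 0 < (jacobianAt (cdk a b) (xk, y₂)).det := by
    rw [hdet]; positivity
  exact ⟨htrneg, hdetpos, fun z hz => root_re_neg _ _ htrneg hdetpos z hz⟩
end

section
/- Let a, b > 0 with b > 1 > a, set y₂ = −(b − 1)/(a − b) and let x_k be either of ±√(y₂/a − y₂²). Let J be the Jacobian matrix of f_{a,b} at (x_k, y₂). Then the discriminant of its characteristic polynomial satisfies (tr J)² − 4·det J = (b − 1)²·b·(b + 8a(a − 1)) / (a²(b − a)²); in particular the eigenvalues of J are non-real (s₃, s₄ are strong attracting foci) if and only if |8a(a − 1)| > b, and they are real and negative (s₃, s₄ are attracting nodes) if |8a(a − 1)| ≤ b. -/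
set_option maxHeartbeats 1000000


lemma jac_cdk (a b x y : ℝ) :
    jacobianAt (cdk a b) (x, y) =
      !![y - a*(3*x^2 + y^2), x - 2*a*x*y;
         -(2*x)*(b*y - b + 1), 2*y - b*(x^2+y^2) - 2*y*(b*y-b+1)] := by
  have hcdk : cdk a b = fun p : ℝ × ℝ =>
      (p.1 * p.2 - a * (p.1 * p.1 * p.1 + p.1 * (p.2 * p.2)),
       p.2 * p.2 - (b * p.2 - b + 1) * (p.1 * p.1 + p.2 * p.2)) := by
    funext p; simp only [cdk, Prod.mk.injEq]; constructor <;> ring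
  have h1 : HasFDerivAt (fun p : ℝ × ℝ => p.1) (ContinuousLinearMap.fst ℝ ℝ ℝ) (x, y) :=
    hasFDerivAt_fst
  have h2 : HasFDerivAt (fun p : ℝ × ℝ => p.2) (ContinuousLinearMap.snd ℝ ℝ ℝ) (x, y) :=
    hasFDerivAt_snd
  have hg := (h1.mul h2).sub ((((h1.mul h1).mul h1).add (h1.mul (h2.mul h2))).const_mul a)
  have hh := (h2.mul h2).sub
    ((((h2.const_mul b).sub_const b).add_const 1).mul ((h1.mul h1).add (h2.mul h2)))
  have H := hg.prodMk hh
  have hf : fderiv ℝ (cdk a b) (x, y) = _ := (hcdk ▸ H).fderiv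
  unfold jacobianAt
  rw [hf]
  ext i j
  fin_cases i <;> fin_cases j <;>
    simp [ContinuousLinearMap.prod_apply, ContinuousLinearMap.add_apply,
      ContinuousLinearMap.sub_apply, ContinuousLinearMap.smul_apply,
      ContinuousLinearMap.coe_fst', ContinuousLinearMap.coe_snd', smul_eq_mul] <;> ring

/-- for `b > 1 > a`, the discriminant of the characteristic
polynomial of the Jacobian `J` at `s₃`, `s₄` equals
`(b−1)²·b·(b+8a(a−1))/(a²(b−a)²)`; the eigenvalues are non-real iff
`|8a(a−1)| > b` (strong attracting foci) and real and negative if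
`|8a(a−1)| ≤ b` (attracting nodes). -/
theorem cdk_s34_focus_or_node (a b : ℝ) (ha : 0 < a) (hb : 0 < b)
    (hab : 1 < b ∧ a < 1)
    (y₂ : ℝ) (hy₂ : y₂ = -(b - 1) / (a - b)) (xk : ℝ)
    (hxk : xk = Real.sqrt (y₂ / a - y₂ ^ 2) ∨ xk = -Real.sqrt (y₂ / a - y₂ ^ 2)) :
    (jacobianAt (cdk a b) (xk, y₂)).trace ^ 2 - 4 * (jacobianAt (cdk a b) (xk, y₂)).det
        = (b - 1) ^ 2 * b * (b + 8 * a * (a - 1)) / (a ^ 2 * (b - a) ^ 2) ∧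
    ((∀ z : ℂ, z ^ 2 - ((jacobianAt (cdk a b) (xk, y₂)).trace : ℂ) * z
          + ((jacobianAt (cdk a b) (xk, y₂)).det : ℂ) = 0 → z.im ≠ 0)
        ↔ |8 * a * (a - 1)| > b) ∧
    (|8 * a * (a - 1)| ≤ b →
      ∀ lam : ℝ, lam ^ 2 - (jacobianAt (cdk a b) (xk, y₂)).trace * lam
          + (jacobianAt (cdk a b) (xk, y₂)).det = 0 → lam < 0) := by
  obtain ⟨hb1, ha1⟩ := hab
  have ha0 : a ≠ 0 := ha.ne'
  have hbapos : (0:ℝ) < b - a := by linarith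
  have hba : b - a ≠ 0 := hbapos.ne'
  have hab' : a - b ≠ 0 := by intro h; apply hba; linarith
  have hy : y₂ = (b - 1) / (b - a) := by
    rw [hy₂]; field_simp; ring
  have hr : y₂ / a - y₂ ^ 2 = (b - 1) * (b * (1 - a)) / (a * (b - a) ^ 2) := by
    rw [hy]; field_simp; ring
  have hrpos : (0:ℝ) ≤ y₂ / a - y₂ ^ 2 := by
    rw [hr]
    apply div_nonneg
    · have h1 : (0:ℝ) ≤ b - 1 := by linarith
      have h2 : (0:ℝ) ≤ b * (1 - a) := by nlinarith
      exact mul_nonneg h1 h2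
    · positivity
  have hx2 : xk ^ 2 = y₂ / a - y₂ ^ 2 := by
    rcases hxk with h | h
    · rw [h, Real.sq_sqrt hrpos]
    · rw [h, show (-Real.sqrt (y₂ / a - y₂ ^ 2)) ^ 2 = (Real.sqrt (y₂ / a - y₂ ^ 2)) ^ 2 from by ring,
        Real.sq_sqrt hrpos]
  have hT : (jacobianAt (cdk a b) (xk, y₂)).trace = -(b * (b - 1)) / (a * (b - a)) := by
    rw [jac_cdk, Matrix.trace_fin_two_of, hx2, hy]
    field_simp
    ring
  have hD : (jacobianAt (cdk a b) (xk, y₂)).det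
      = 2 * b * (1 - a) * (b - 1) ^ 2 / (a * (b - a) ^ 2) := by
    rw [jac_cdk, Matrix.det_fin_two_of]
    have key : (xk - 2*a*xk*y₂) * (-(2*xk)*(b*y₂ - b + 1))
        = -(2*(xk^2)) * ((1 - 2*a*y₂)*(b*y₂ - b + 1)) := by ring
    rw [key, hx2, hy]
    field_simp
    ring
  have hdisc : (jacobianAt (cdk a b) (xk, y₂)).trace ^ 2
        - 4 * (jacobianAt (cdk a b) (xk, y₂)).det
      = (b - 1) ^ 2 * b * (b + 8 * a * (a - 1)) / (a ^ 2 * (b - a) ^ 2) := by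
    rw [hT, hD]; field_simp; ring
  have hC : (0:ℝ) < (b - 1) ^ 2 * b / (a ^ 2 * (b - a) ^ 2) := by
    apply div_pos
    · exact mul_pos (pow_pos (by linarith) 2) hb
    · exact mul_pos (pow_pos ha 2) (pow_pos hbapos 2)
  have hdisc' : (jacobianAt (cdk a b) (xk, y₂)).trace ^ 2
        - 4 * (jacobianAt (cdk a b) (xk, y₂)).det
      = ((b - 1) ^ 2 * b / (a ^ 2 * (b - a) ^ 2)) * (b + 8 * a * (a - 1)) := by
    rw [hdisc]; ring
  have habs : |8 * a * (a - 1)| = -(8 * a * (a - 1)) := by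
    apply abs_of_neg; nlinarith
  set T := (jacobianAt (cdk a b) (xk, y₂)).trace with hTdef
  set D := (jacobianAt (cdk a b) (xk, y₂)).det with hDdef
  have hTneg : T < 0 := by
    rw [hT]
    apply div_neg_of_neg_of_pos
    · nlinarith
    · exact mul_pos ha hbapos
  have hDpos : (0:ℝ) < D := by
    rw [hD]
    apply div_pos
    · have h1 : (0:ℝ) < (b - 1) ^ 2 := pow_pos (by linarith) 2
      have h2 : (0:ℝ) < 1 - a := by linarith
      exact mul_pos (mul_pos (mul_pos two_pos hb) h2) h1
    · exact mul_pos ha (pow_pos hbapos 2)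
  refine ⟨hdisc, ?_, ?_⟩
  · constructor
    · intro hall
      by_contra hle
      push_neg at hle
      have hnn : (0:ℝ) ≤ b + 8 * a * (a - 1) := by rw [habs] at hle; linarith
      have hΔ : (0:ℝ) ≤ T ^ 2 - 4 * D := by
        rw [hdisc']; exact mul_nonneg hC.le hnn
      set s := Real.sqrt (T ^ 2 - 4 * D) with hsdef
      have hs : s ^ 2 = T ^ 2 - 4 * D := Real.sq_sqrt hΔ
      have hreq : ((T + s) / 2) ^ 2 - T * ((T + s) / 2) + D = 0 := by
        linear_combination hs / 4
      have := hall (((T + s) / 2 : ℝ) : ℂ) (by exact_mod_cast hreq)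
      exact this (Complex.ofReal_im _)
    · intro hgt z hz
      have hneg : b + 8 * a * (a - 1) < 0 := by rw [habs] at hgt; linarith
      have hΔ : T ^ 2 - 4 * D < 0 := by
        rw [hdisc']; exact mul_neg_of_pos_of_neg hC hneg
      intro h0
      have hz' : z = (z.re : ℂ) := by
        apply Complex.ext <;> simp [h0]
      rw [hz'] at hz
      have hre : (z.re) ^ 2 - T * z.re + D = 0 := by exact_mod_cast hz
      nlinarith [sq_nonneg (2 * z.re - T)]
  · intro _ lam heq
    by_contra h
    push_neg at h
    nlinarith [sq_nonneg lam, mul_nonneg h (neg_nonneg.2 hTneg.le)]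
end

section
/- For the parameter values a = 5/2 and b = 19/10 and the point (x, y) = (1/10, 9/10), the following two facts hold: (i) x² + y² > max{ 1/a², (2 − b)/b² }, i.e. the point lies strictly outside the circle of radius r = √(max{a⁻², (2−b)/b²}) = 0.4 centred at the origin; (ii) the derivative of the Lyapunov function V(x,y) = x² + y² along the rational CDK vector field is strictly positive at this point, i.e. x·( xy/(x² + y²) − a x ) + y·( y²/(x² + y²) − b y + b − 1 ) > 0. Hence the claim of Aldridge, Davies and Eales that every forward orbit converges into the circle of radius r is false. -/
/-- for `a = 5/2`, `b = 19/10` and the point `(1/10, 9/10)`: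
(i) the point lies strictly outside the circle of radius
`r = √(max{a⁻², (2−b)/b²}) = 0.4` around the origin, and
(ii) the derivative of the Lyapunov function `V = x² + y²` along the rational
CDK vector field is strictly positive there — refuting the claim of Aldridge,
Davies and Eales. -/
theorem cdk_lyapunov_counterexample :
    let a : ℝ := 5 / 2
    let b : ℝ := 19 / 10
    let x : ℝ := 1 / 10
    let y : ℝ := 9 / 10
    (x ^ 2 + y ^ 2 > max (1 / a ^ 2) ((2 - b) / b ^ 2) ∧
      Real.sqrt (max (1 / a ^ 2) ((2 - b) / b ^ 2)) = 2 / 5) ∧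
    0 < x * (x * y / (x ^ 2 + y ^ 2) - a * x)
        + y * (y ^ 2 / (x ^ 2 + y ^ 2) - b * y + b - 1) := by
  refine ⟨⟨by norm_num, ?_⟩, by norm_num⟩
  have : max (1 / (5/2 : ℝ) ^ 2) ((2 - 19/10) / (19/10) ^ 2) = (2/5)^2 := by
    norm_num
  rw [this, Real.sqrt_sq (by norm_num)]
end

section
/- For every y₀ ∈ ℝ, the slope field of Sprott's logarithmic system satisfies lim_{(x,y) → (0, y₀), x ≠ 0} ( (1/2)·ln(x²) + x ) / ( (1/2)·ln(x²) − y ) = 1; i.e., the function (x, y) ↦ ((1/2)ln(x²) + x)/((1/2)ln(x²) − y) tends to 1 as (x, y) tends to (0, y₀) within the set { (x,y) : x ≠ 0 }. Hence the streamlines cross the y-axis with constant slope 1. -/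
open Filter Topology

/-- the slope field of Sprott's logarithmic system tends to `1`
as `(x, y) → (0, y₀)` within the set `{x ≠ 0}`: the streamlines cross the
`y`-axis with constant slope `1`. -/
theorem sprott_slope_tendsto_one (y₀ : ℝ) :
    Tendsto
      (fun p : ℝ × ℝ =>
        ((1 / 2) * Real.log (p.1 ^ 2) + p.1) / ((1 / 2) * Real.log (p.1 ^ 2) - p.2))
      (𝓝[{p : ℝ × ℝ | p.1 ≠ 0}] ((0, y₀) : ℝ × ℝ)) (𝓝 1) := by
  set F := 𝓝[{p : ℝ × ℝ | p.1 ≠ 0}] ((0, y₀) : ℝ × ℝ) with hF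
  set L : ℝ × ℝ → ℝ := fun p => (1 / 2) * Real.log (p.1 ^ 2) with hL
  have hx0 : Tendsto (fun p : ℝ × ℝ => p.1) F (𝓝 0) :=
    (continuous_fst.tendsto _).mono_left nhdsWithin_le_nhds
  have hxne : ∀ᶠ p : ℝ × ℝ in F, p.1 ≠ 0 := eventually_mem_nhdsWithin
  have hy0 : Tendsto (fun p : ℝ × ℝ => p.2) F (𝓝 y₀) :=
    (continuous_snd.tendsto _).mono_left nhdsWithin_le_nhds
  have hsq : Tendsto (fun p : ℝ × ℝ => p.1 ^ 2) F (𝓝[>] 0) := by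
    refine tendsto_nhdsWithin_iff.2 ⟨by simpa using hx0.pow 2, ?_⟩
    filter_upwards [hxne] with p hp
    exact pow_two_pos_of_ne_zero hp
  have hlog : Tendsto (fun p : ℝ × ℝ => Real.log (p.1 ^ 2)) F atBot :=
    Real.tendsto_log_nhdsGT_zero.comp hsq
  have hLbot : Tendsto L F atBot := by
    simpa [hL] using hlog.const_mul_atBot (by norm_num : (0:ℝ) < 1 / 2)
  have hLinv : Tendsto (fun p => (L p)⁻¹) F (𝓝 0) := by
    have h := ((tendsto_neg_atBot_atTop.comp hLbot).inv_tendsto_atTop).neg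
    simpa using h
  have hxL : Tendsto (fun p : ℝ × ℝ => p.1 / L p) F (𝓝 0) := by
    simpa [div_eq_mul_inv] using hx0.mul hLinv
  have hyL : Tendsto (fun p : ℝ × ℝ => p.2 / L p) F (𝓝 0) := by
    simpa [div_eq_mul_inv] using hy0.mul hLinv
  have hnum : Tendsto (fun p : ℝ × ℝ => 1 + p.1 / L p) F (𝓝 1) := by
    simpa using tendsto_const_nhds.add hxL
  have hden : Tendsto (fun p : ℝ × ℝ => 1 - p.2 / L p) F (𝓝 1) := by
    simpa using tendsto_const_nhds.sub hyL
  have hquot : Tendsto (fun p : ℝ × ℝ => (1 + p.1 / L p) / (1 - p.2 / L p)) F (𝓝 1) := by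
    have h := hnum.div hden one_ne_zero
    rw [div_one] at h
    exact h
  have hLne : ∀ᶠ p : ℝ × ℝ in F, L p ≠ 0 :=
    (hLbot.eventually_lt_atBot 0).mono fun p hp => hp.ne
  refine hquot.congr' ?_
  filter_upwards [hLne] with p hp
  have e1 : 1 + p.1 / L p = (L p + p.1) / L p := by rw [add_div, div_self hp]
  have e2 : 1 - p.2 / L p = (L p - p.2) / L p := by rw [sub_div, div_self hp]
  show (1 + p.1 / L p) / (1 - p.2 / L p) = (L p + p.1) / (L p - p.2)
  rw [e1, e2]
  rcases eq_or_ne (L p - p.2) 0 with hd | hd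
  · simp [hd]
  · field_simp
end

section
/- Sprott's logarithmic system has exactly one stationary point: there exists a unique pair (x, y) ∈ ℝ² with x ≠ 0 such that (1/2)·ln(x²) − y = 0 and (1/2)·ln(x²) + x = 0; moreover this unique pair satisfies x > 0, x·eˣ = 1 (i.e. x = W(1), the value of the Lambert W function at 1) and y = −x. -/
private lemma sprott_log_sq (x : ℝ) : (1/2 : ℝ) * Real.log (x ^ 2) = Real.log x := by
  rw [Real.log_pow]; push_cast; ring

private lemma sprott_root_exists : ∃ x : ℝ, 0 < x ∧ Real.log x + x = 0 := by
  have hc : ContinuousOn (fun x : ℝ => Real.log x + x) (Set.Icc (1/2 : ℝ) 1) := by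
    apply ContinuousOn.add
    · apply Real.continuousOn_log.mono
      intro x hx
      simp only [Set.mem_compl_iff, Set.mem_singleton_iff]
      intro h; rw [h] at hx
      exact absurd hx.1 (by norm_num)
    · exact continuousOn_id
  have hsub := intermediate_value_Icc (by norm_num : (1/2:ℝ) ≤ 1) hc
  have h2 := Real.log_two_gt_d9
  have hmem : (0:ℝ) ∈ Set.Icc (Real.log (1/2) + 1/2) (Real.log 1 + 1) := by
    constructor
    · rw [show (1/2:ℝ) = 2⁻¹ by norm_num, Real.log_inv]; linarith
    · rw [Real.log_one]; norm_num
  obtain ⟨x, hx, hfx⟩ := hsub hmem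
  exact ⟨x, by linarith [hx.1], hfx⟩

/-- Sprott's logarithmic system has exactly one stationary point
`(x, y)` with `x ≠ 0`; it satisfies `x > 0`, `x·eˣ = 1` (i.e. `x = W(1)`) and
`y = −x`. -/
theorem sprott_unique_stationary_point :
    (∃! p : ℝ × ℝ, p.1 ≠ 0 ∧
        (1 / 2) * Real.log (p.1 ^ 2) - p.2 = 0 ∧
        (1 / 2) * Real.log (p.1 ^ 2) + p.1 = 0) ∧
    ∀ p : ℝ × ℝ, (p.1 ≠ 0 ∧
        (1 / 2) * Real.log (p.1 ^ 2) - p.2 = 0 ∧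
        (1 / 2) * Real.log (p.1 ^ 2) + p.1 = 0) →
      0 < p.1 ∧ p.1 * Real.exp p.1 = 1 ∧ p.2 = -p.1 := by
  obtain ⟨x₀, hx₀pos, hroot⟩ := sprott_root_exists
  have key : ∀ p : ℝ × ℝ, (p.1 ≠ 0 ∧
      (1 / 2) * Real.log (p.1 ^ 2) - p.2 = 0 ∧
      (1 / 2) * Real.log (p.1 ^ 2) + p.1 = 0) →
      0 < p.1 ∧ Real.log p.1 + p.1 = 0 ∧ p.2 = -p.1 := by
    rintro ⟨x, y⟩ ⟨hne, h1, h2⟩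
    simp only [sprott_log_sq] at h1 h2
    have hlog : Real.log x = -x := by linarith
    have hxpos : 0 < x := by
      by_contra h
      push_neg at h
      have hneg : x < 0 := lt_of_le_of_ne h hne
      have hle : Real.log (-x) ≤ -x - 1 := Real.log_le_sub_one_of_pos (by linarith)
      rw [← Real.log_neg_eq_log] at hlog
      linarith
    exact ⟨hxpos, by linarith, by linarith⟩
  constructor
  · refine ⟨(x₀, -x₀), ⟨ne_of_gt hx₀pos, ?_, ?_⟩, ?_⟩
    · simp only [sprott_log_sq]; linarith
    · simp only [sprott_log_sq]; linarith
    · rintro ⟨x, y⟩ hp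
      obtain ⟨hxpos, hlx, hy⟩ := key _ hp
      have hxx : x = x₀ := by
        by_contra hne
        rcases lt_or_gt_of_ne hne with h | h
        · have := Real.log_lt_log hxpos h
          linarith
        · have := Real.log_lt_log hx₀pos h
          linarith
      simp only [Prod.ext_iff]
      exact ⟨hxx, by simpa [hxx] using hy⟩
  · intro p hp
    obtain ⟨hxpos, hlx, hy⟩ := key p hp
    refine ⟨hxpos, ?_, hy⟩
    have h := congrArg Real.exp hlx
    rwa [Real.exp_add, Real.exp_log hxpos, Real.exp_zero] at h
end
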